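/- Assume the Common Givens: P_i is a preference order on C consistent with Q; the query is the pair (c_j,c_k) with P_i(c_j,c_k); and neither (c_j,c_k) nor (c_k,c_j) belongs to Q. Let P' ∈ μ(P_i). Then the relative order that P' induces on the set [∞, P', c_k] (the set consisting of c_k and all candidates above c_k in P') coincides with the relative order P_i induces on that set, and the relative order that P' induces on the set [c_j, P', −∞] (the set consisting of c_j and all candidates below c_j in P') coincides with the relative order P_i induces on that set. -/
import Mathlib


/-- A preference order: a strict total order on candidates. -/
def IsPref {C : Type*} (P : C → C → Prop) : Prop :=
  (∀ a b : C, a ≠ b → P a b ∨ P b a) ∧ (∀ a : C, ¬ P a a) ∧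
    ∀ a b c : C, P a b → P b c → P a c

/-- The (closed) segment `[c, P, c']` of candidates between `c` and `c'`. -/
def seg {C : Type*} (P : C → C → Prop) (c c' : C) : Set C :=
  {d : C | (d = c ∨ P c d) ∧ (d = c' ∨ P d c')}

/-- `Q` is a strict partial order (consistent, transitively closed reported preferences). -/
def IsSPO {C : Type*} (Q : C → C → Prop) : Prop :=
  (∀ a : C, ¬ Q a a) ∧ ∀ a b c : C, Q a b → Q b c → Q a c

/-- `P` is consistent with (extends) the reported preferences `Q`, written `P ⊨ Q`. -/
def Extends {C : Type*} (P Q : C → C → Prop) : Prop := ∀ a b : C, Q a b → P a b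

/-- The swap distance between two preference orders: the number of (unordered) pairs of
candidates ordered differently, counted here as ordered pairs `(a, b)` with
`P a b` and `P' b a`. -/
noncomputable def dswap {C : Type*} [Fintype C] (P P' : C → C → Prop) : ℕ :=
  Set.ncard {p : C × C | P p.1 p.2 ∧ P' p.2 p.1}

/-- `P` is a preference order consistent with the transitive closure of `Q ∪ {(ck, cj)}`
(for a transitive total order this is the same as extending `Q` and putting `ck` above `cj`). -/
def Feasible {C : Type*} (Q : C → C → Prop) (cj ck : C) (P : C → C → Prop) : Prop :=
  IsPref P ∧ Extends P Q ∧ P ck cj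

/-- `P ∈ μ(Pi)`: among all preference orders consistent with the transitive closure of
`Q ∪ {(ck, cj)}`, `P` minimizes the swap distance to `Pi`. -/
def InMu {C : Type*} [Fintype C] (Q : C → C → Prop) (cj ck : C)
    (Pi P : C → C → Prop) : Prop :=
  Feasible Q cj ck P ∧ ∀ R : C → C → Prop, Feasible Q cj ck R → dswap Pi P ≤ dswap Pi R

lemma pref_asymm {C : Type*} {P : C → C → Prop} (h : IsPref P) {a b : C}
    (hab : P a b) : ¬ P b a := fun hba => h.2.1 a (h.2.2 a b a hab hba)

lemma swap_lemma {C : Type*} [Fintype C] (Pi P' : C → C → Prop)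
    (hPi : IsPref Pi) (hP' : IsPref P') (x y : C) (hxy : P' x y)
    (hadj : ∀ z, ¬(P' x z ∧ P' z y)) (hPiyx : Pi y x) :
    ∃ R : C → C → Prop, IsPref R ∧
      (∀ a b, R a b ↔ ((P' a b ∧ ¬(a = x ∧ b = y)) ∨ (a = y ∧ b = x))) ∧
      dswap Pi R < dswap Pi P' := by
  have hxney : x ≠ y := fun h => hP'.2.1 x (h ▸ hxy)
  refine ⟨fun a b => (P' a b ∧ ¬(a = x ∧ b = y)) ∨ (a = y ∧ b = x), ?_, fun a b => Iff.rfl, ?_⟩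
  · refine ⟨?_, ?_, ?_⟩
    · intro a b hab
      rcases hP'.1 a b hab with h | h
      · by_cases hc : a = x ∧ b = y
        · exact Or.inr (Or.inr ⟨hc.2, hc.1⟩)
        · exact Or.inl (Or.inl ⟨h, hc⟩)
      · by_cases hc : b = x ∧ a = y
        · exact Or.inl (Or.inr ⟨hc.2, hc.1⟩)
        · exact Or.inr (Or.inl ⟨h, hc⟩)
    · rintro a (⟨h, _⟩ | ⟨h1, h2⟩)
      · exact hP'.2.1 a h
      · exact hxney (h2 ▸ h1 ▸ rfl)
    · rintro a b c (⟨hab, hne1⟩ | ⟨hay, hbx⟩) (⟨hbc, hne2⟩ | ⟨hby, hcx⟩)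
      · refine Or.inl ⟨hP'.2.2 a b c hab hbc, ?_⟩
        rintro ⟨rfl, rfl⟩; exact hadj b ⟨hab, hbc⟩
      · -- b = y, c = x, P' a y, a ≠ x
        have hay' : P' a y := hby ▸ hab
        have hax : a ≠ x := fun h => hne1 ⟨h, hby⟩
        have hP'ax : P' a x := by
          rcases hP'.1 a x hax with h | h
          · exact h
          · exact absurd ⟨h, hay'⟩ (hadj a)
        refine Or.inl ⟨hcx ▸ hP'ax, ?_⟩
        rintro ⟨h1, h2⟩
        exact hxney ((hcx.symm.trans h2) ▸ rfl)
      · -- a = y, b = x, P' x c, c ≠ y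
        have hxc : P' x c := hbx ▸ hbc
        have hcy : c ≠ y := fun h => hne2 ⟨hbx, h⟩
        have hP'yc : P' y c := by
          rcases hP'.1 y c (fun h => hcy h.symm) with h | h
          · exact h
          · exact absurd ⟨hxc, h⟩ (hadj c)
        refine Or.inl ⟨hay ▸ hP'yc, ?_⟩
        rintro ⟨h1, h2⟩
        exact hxney ((hay.symm.trans h1).symm)
      · exact absurd (hbx.symm.trans hby) hxney
  · have hset : {p : C × C | Pi p.1 p.2 ∧
        ((P' p.2 p.1 ∧ ¬(p.2 = x ∧ p.1 = y)) ∨ (p.2 = y ∧ p.1 = x))} =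
        {p : C × C | Pi p.1 p.2 ∧ P' p.2 p.1} \ {(y, x)} := by
      ext ⟨p, q⟩
      simp only [Set.mem_setOf_eq, Set.mem_diff, Set.mem_singleton_iff, Prod.mk.injEq]
      constructor
      · rintro ⟨hpq, ⟨hqp, hne⟩ | ⟨rfl, rfl⟩⟩
        · refine ⟨⟨hpq, hqp⟩, ?_⟩
          rintro ⟨rfl, rfl⟩; exact hne ⟨rfl, rfl⟩
        · exact absurd hpq (pref_asymm hPi hPiyx)
      · rintro ⟨⟨hpq, hqp⟩, hne⟩
        refine ⟨hpq, Or.inl ⟨hqp, ?_⟩⟩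
        rintro ⟨rfl, rfl⟩; exact hne ⟨rfl, rfl⟩
    unfold dswap
    rw [hset]
    apply Set.ncard_lt_ncard _ (Set.toFinite _)
    constructor
    · exact Set.diff_subset
    · intro hsub
      have : (y, x) ∈ {p : C × C | Pi p.1 p.2 ∧ P' p.2 p.1} \ {(y, x)} :=
        hsub ⟨hPiyx, hxy⟩
      exact this.2 rfl
lemma agree {C : Type*} [Fintype C] (Q : C → C → Prop)
    (Pi : C → C → Prop) (hPi : IsPref Pi) (hPiQ : Extends Pi Q)
    (cj ck : C) (P' : C → C → Prop) (hmu : InMu Q cj ck Pi P')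
    (S : Set C)
    (hconv : ∀ a b z : C, a ∈ S → b ∈ S → P' a z → P' z b → z ∈ S)
    (hsafe : ∀ a b : C, a ∈ S → b ∈ S → ¬(a = ck ∧ b = cj)) :
    ∀ a b : C, a ∈ S → b ∈ S → P' a b → Pi a b := by
  obtain ⟨⟨hP', hP'Q, hP'kj⟩, hmin⟩ := hmu
  have main : ∀ n : ℕ, ∀ a b : C, a ∈ S → b ∈ S → P' a b →
      ({z : C | P' a z ∧ P' z b}).ncard = n → Pi a b := by
    intro n
    induction n using Nat.strong_induction_on with
    | _ n ih =>
      intro a b ha hb hab hn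
      by_cases hadj : ∀ z, ¬(P' a z ∧ P' z b)
      · by_contra hPiab
        have hne : a ≠ b := fun h => hP'.2.1 a (h ▸ hab)
        have hPiba : Pi b a := (hPi.1 a b hne).resolve_left hPiab
        obtain ⟨R, hRpref, hRdef, hRlt⟩ :=
          swap_lemma Pi P' hPi hP' a b hab hadj hPiba
        have hfeas : Feasible Q cj ck R := by
          refine ⟨hRpref, ?_, ?_⟩
          · intro p q hpq
            rw [hRdef]
            refine Or.inl ⟨hP'Q p q hpq, ?_⟩
            rintro ⟨rfl, rfl⟩
            exact pref_asymm hPi hPiba (hPiQ p q hpq)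
          · rw [hRdef]
            exact Or.inl ⟨hP'kj, fun hc => hsafe a b ha hb ⟨hc.1.symm, hc.2.symm⟩⟩
        exact absurd (hmin R hfeas) (not_le.mpr hRlt)
      · push_neg at hadj
        obtain ⟨z, haz, hzb⟩ := hadj
        have hz : z ∈ S := hconv a b z ha hb haz hzb
        have hsub1 : {w : C | P' a w ∧ P' w z} ⊂ {w : C | P' a w ∧ P' w b} := by
          constructor
          · intro w ⟨h1, h2⟩; exact ⟨h1, hP'.2.2 w z b h2 hzb⟩
          · intro hcon
            exact hP'.2.1 z (hcon ⟨haz, hzb⟩).2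
        have hsub2 : {w : C | P' z w ∧ P' w b} ⊂ {w : C | P' a w ∧ P' w b} := by
          constructor
          · intro w ⟨h1, h2⟩; exact ⟨hP'.2.2 a z w haz h1, h2⟩
          · intro hcon
            exact hP'.2.1 z (hcon ⟨haz, hzb⟩).1
        have h1 := Set.ncard_lt_ncard hsub1 (Set.toFinite _)
        have h2 := Set.ncard_lt_ncard hsub2 (Set.toFinite _)
        rw [hn] at h1 h2
        exact hPi.2.2 a z b
          (ih _ h1 a z ha hz haz rfl) (ih _ h2 z b hz hb hzb rfl)
  intro a b ha hb hab
  exact main _ a b ha hb hab rfl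

theorem statement8 {C : Type*} [Fintype C]
    (Q : C → C → Prop) (hQ : IsSPO Q)
    (Pi : C → C → Prop) (hPi : IsPref Pi) (hPiQ : Extends Pi Q)
    (cj ck : C) (hjk : Pi cj ck) (hQjk : ¬ Q cj ck) (hQkj : ¬ Q ck cj)
    (P' : C → C → Prop) (hmu : InMu Q cj ck Pi P') :
    (∀ a b : C, (a = ck ∨ P' a ck) → (b = ck ∨ P' b ck) → (P' a b ↔ Pi a b)) ∧
      ∀ a b : C, (a = cj ∨ P' cj a) → (b = cj ∨ P' cj b) → (P' a b ↔ Pi a b) := by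
  obtain ⟨⟨hP', hP'Q, hP'kj⟩, hmin⟩ := hmu
  have hkj : ck ≠ cj := fun h => hPi.2.1 cj (h ▸ hjk)
  have key : ∀ S : Set C, (∀ a b z : C, a ∈ S → b ∈ S → P' a z → P' z b → z ∈ S) →
      (∀ a b : C, a ∈ S → b ∈ S → ¬(a = ck ∧ b = cj)) →
      ∀ a b : C, a ∈ S → b ∈ S → (P' a b ↔ Pi a b) := by
    intro S hconv hsafe a b ha hb
    have h := agree Q Pi hPi hPiQ cj ck P' ⟨⟨hP', hP'Q, hP'kj⟩, hmin⟩ S hconv hsafe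
    constructor
    · exact h a b ha hb
    · intro hPiab
      have hne : a ≠ b := fun he => hPi.2.1 a (he ▸ hPiab)
      rcases hP'.1 a b hne with h' | h'
      · exact h'
      · exact absurd (h b a hb ha h') (pref_asymm hPi hPiab)
  constructor
  · intro a b ha hb
    refine key {d : C | d = ck ∨ P' d ck} ?_ ?_ a b ha hb
    · intro p q z hp hq hpz hzq
      rcases hq with rfl | hq
      · exact Or.inr hzq
      · exact Or.inr (hP'.2.2 z q ck hzq hq)
    · rintro p q hp hq ⟨rfl, rfl⟩
      rcases hq with h | h
      · exact hkj h.symm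
      · exact pref_asymm hP' hP'kj h
  · intro a b ha hb
    refine key {d : C | d = cj ∨ P' cj d} ?_ ?_ a b ha hb
    · intro p q z hp hq hpz hzq
      rcases hp with rfl | hp
      · exact Or.inr hpz
      · exact Or.inr (hP'.2.2 cj p z hp hpz)
    · rintro p q hp hq ⟨rfl, rfl⟩
      rcases hp with h | h
      · exact hkj h
      · exact pref_asymm hP' hP'kj h
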